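/- Let T be a finite tree with at least one edge, let w : E(T) → ℕ be an edge-weight function, and let G = BF(T,w). Then the edge ideal I(G) is bridge-friendly; i.e., there exists a total order on mingens(I(G)) with respect to which every potentially-type-2 subset is type-2. -/

import Mathlib

open scoped Classical

noncomputable section

namespace ChauHaMaithani

variable {V : Type*}

/-- The lcm of a finite set of monomials (exponent vectors): pointwise maximum. -/
def mlcm (σ : Finset (V → ℕ)) : V → ℕ := fun v => σ.sup fun g => g v

/-- `m` is a bridge of `σ`: `m ∈ σ` and dropping `m` does not change the lcm. -/
def IsBridge (σ : Finset (V → ℕ)) (m : V → ℕ) : Prop :=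
  m ∈ σ ∧ mlcm (σ.erase m) = mlcm σ

/-- `m` is a gap of `σ`: `m ∉ σ` and adding `m` does not change the lcm. -/
def IsGap (σ : Finset (V → ℕ)) (m : V → ℕ) : Prop :=
  m ∉ σ ∧ mlcm (insert m σ) = mlcm σ

/-- A total order `≻` on monomials is encoded by a ranking function `ord`:
`m ≻ m'` iff `ord m' < ord m` (injectivity on the generating set is assumed separately).
`m` is a true gap of `σ` if it is a gap and every bridge of `σ ∪ {m}` dominated by `m`
is already a bridge of `σ`. -/
def IsTrueGap (ord : (V → ℕ) → ℕ) (σ : Finset (V → ℕ)) (m : V → ℕ) : Prop :=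
  IsGap σ m ∧ ∀ m', IsBridge (insert m σ) m' → ord m' < ord m → IsBridge σ m'

/-- `σ` is type-1: it has a true gap (in `M`) dominating none of its bridges. -/
def Type1 (M : Finset (V → ℕ)) (ord : (V → ℕ) → ℕ) (σ : Finset (V → ℕ)) : Prop :=
  ∃ m ∈ M, IsTrueGap ord σ m ∧ ∀ b, IsBridge σ b → ¬ ord b < ord m

/-- `σ` is potentially-type-2: it has a bridge dominating none of its true gaps. -/
def PotType2 (M : Finset (V → ℕ)) (ord : (V → ℕ) → ℕ) (σ : Finset (V → ℕ)) : Prop :=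
  ∃ b, IsBridge σ b ∧ ∀ m ∈ M, IsTrueGap ord σ m → ¬ ord m < ord b

/-- `b` is the `≻`-smallest bridge of `σ`. -/
def IsSBridge (ord : (V → ℕ) → ℕ) (σ : Finset (V → ℕ)) (b : V → ℕ) : Prop :=
  IsBridge σ b ∧ ∀ b', IsBridge σ b' → ord b ≤ ord b'

/-- `σ` is type-2. -/
def Type2 (M : Finset (V → ℕ)) (ord : (V → ℕ) → ℕ) (σ : Finset (V → ℕ)) : Prop :=
  PotType2 M ord σ ∧
    ∀ σ' : Finset (V → ℕ), σ' ⊆ M → σ' ≠ σ → PotType2 M ord σ' →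
      ∀ b b', IsSBridge ord σ b → IsSBridge ord σ' b' →
        σ'.erase b' = σ.erase b → ord b < ord b'

/-- `M` (the minimal generating set of a monomial ideal) is bridge-friendly w.r.t. `ord`:
every potentially-type-2 subset is type-2. -/
def BridgeFriendlyWrt (M : Finset (V → ℕ)) (ord : (V → ℕ) → ℕ) : Prop :=
  ∀ σ ⊆ M, PotType2 M ord σ → Type2 M ord σ

/-- `M` is bridge-friendly: bridge-friendly w.r.t. some total order on `M`. -/
def BridgeFriendly (M : Finset (V → ℕ)) : Prop :=
  ∃ ord : (V → ℕ) → ℕ, Set.InjOn ord M ∧ BridgeFriendlyWrt M ord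

/-- `σ = {m_1 ≻ ⋯ ≻ m_k} ⊆ M` is Lyubeznik-critical w.r.t. `ord`: there is no `m ∈ M` with
`m_t ≻ m` and `m ∣ lcm(m_1, …, m_t)` for some `1 < t ≤ k`. -/
def LyubCritical (M : Finset (V → ℕ)) (ord : (V → ℕ) → ℕ) (σ : Finset (V → ℕ)) : Prop :=
  σ ⊆ M ∧ ¬ ∃ m ∈ M, ∃ t ∈ σ, (∃ u ∈ σ, ord t < ord u) ∧ ord m < ord t ∧
      ∀ v, m v ≤ mlcm (σ.filter fun g => ord t ≤ ord g) v

/-- `M` is Lyubeznik: for some total order on `M`, no Lyubeznik-critical subset has a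
bridge (equivalently, the associated Lyubeznik resolution is minimal). -/
def IsLyubeznik (M : Finset (V → ℕ)) : Prop :=
  ∃ ord : (V → ℕ) → ℕ, Set.InjOn ord M ∧
    ∀ σ : Finset (V → ℕ), LyubCritical M ord σ → ∀ b, ¬ IsBridge σ b

/-- The quadratic monomial `xy` attached to an edge `e = {x,y}`. -/
def edgeMon (e : Sym2 V) : V → ℕ := fun v => if v ∈ e then 1 else 0

/-- `mingens(I(G))`: the edge monomials of `G`. -/
def edgeGens [Fintype V] (G : SimpleGraph V) : Finset (V → ℕ) :=
  (Finset.univ.filter fun e : Sym2 V => e ∈ G.edgeSet).image edgeMon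

/-- `mingens(I(G)^n)`: the monomials that are products of `n` edges of `G`. -/
def edgePowGens [Fintype V] (G : SimpleGraph V) (n : ℕ) : Finset (V → ℕ) :=
  (Finset.univ.filter fun f : Fin n → Sym2 V => ∀ i, f i ∈ G.edgeSet).image
    fun f => ∑ i, edgeMon (f i)

/-- A graph is chordal if it contains no induced cycle of length at least 4. -/
def Chordal (G : SimpleGraph V) : Prop :=
  ∀ n, 4 ≤ n → IsEmpty (SimpleGraph.cycleGraph n ↪g G)


/-- Vertex type of the graph `L(a,b,c)`: `Sum.inl 0` is `x`, `Sum.inl 1` is `y`,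
and the remaining summands are the leaves `x_i`, the leaves `y_j`, and the
triangle tips `z_k`. -/
abbrev LV (a b c : ℕ) := Fin 2 ⊕ (Fin a ⊕ Fin b ⊕ Fin c)

/-- The graph `L(a,b,c)`: `c` triangles glued along the common edge `{x,y}`, with
`a` leaves attached to `x` and `b` leaves attached to `y`. -/
def LGraph (a b c : ℕ) : SimpleGraph (LV a b c) :=
  SimpleGraph.fromRel fun u v =>
    (u = Sum.inl 0 ∧ v = Sum.inl 1) ∨
    (∃ i, u = Sum.inl 0 ∧ v = Sum.inr (Sum.inl i)) ∨
    (∃ j, u = Sum.inl 1 ∧ v = Sum.inr (Sum.inr (Sum.inl j))) ∨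
    (∃ k, (u = Sum.inl 0 ∨ u = Sum.inl 1) ∧ v = Sum.inr (Sum.inr (Sum.inr k)))

/-- The graph `BF(T,w)`: attach `w(e)` new triangles along each edge `e` of `T`. -/
def BFGraph {VT : Type} (T : SimpleGraph VT) (w : T.edgeSet → ℕ) :
    SimpleGraph (VT ⊕ (Σ e : T.edgeSet, Fin (w e))) :=
  SimpleGraph.fromRel fun u v =>
    (∃ a b, u = Sum.inl a ∧ v = Sum.inl b ∧ T.Adj a b) ∨
    (∃ (a : VT) (e : T.edgeSet) (i : Fin (w e)), u = Sum.inl a ∧ v = Sum.inr ⟨e, i⟩ ∧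
      a ∈ (e : Sym2 VT))

/-- The kite graph: the diamond (`K₄` minus the edge `{2,3}`) together with a pendant
vertex `4` attached to the degree-two vertex `2`. -/
def kite : SimpleGraph (Fin 5) :=
  SimpleGraph.fromEdgeSet {s(0,1), s(0,2), s(0,3), s(1,2), s(1,3), s(2,4)}

/-- The gem graph: the path `0-1-2-3` together with a vertex `4` adjacent to all of
`0,1,2,3`. -/
def gem : SimpleGraph (Fin 5) :=
  SimpleGraph.fromEdgeSet {s(0,1), s(1,2), s(2,3), s(0,4), s(1,4), s(2,4), s(3,4)}

/-- The tadpole graph: the triangle `0,1,2` with a path `0-3-4` of length 2 attached. -/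
def tadpole : SimpleGraph (Fin 5) :=
  SimpleGraph.fromEdgeSet {s(0,1), s(1,2), s(0,2), s(0,3), s(3,4)}

/-- The butterfly graph: two triangles `0,1,2` and `0,3,4` sharing the vertex `0`. -/
def butterfly : SimpleGraph (Fin 5) :=
  SimpleGraph.fromEdgeSet {s(0,1), s(1,2), s(0,2), s(0,3), s(3,4), s(0,4)}

/-- The net graph: the triangle `0,1,2` with pendant vertices `3,4,5` attached to
`0,1,2` respectively. -/
def net : SimpleGraph (Fin 6) :=
  SimpleGraph.fromEdgeSet {s(0,1), s(1,2), s(0,2), s(0,3), s(1,4), s(2,5)}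


-- ============ auxiliary development ============

/-- Pin a single classical `DecidableEq` instance for monomial types, matching the
instance used in the definitions above. -/
noncomputable instance (priority := 2000) dEqFun {V : Type*} : DecidableEq (V → ℕ) :=
  fun _ _ => Classical.propDecidable _

section Aux
variable {V : Type*}

lemma mlcm_insert (m : V → ℕ) (σ : Finset (V → ℕ)) (v : V) :
    mlcm (insert m σ) v = max (m v) (mlcm σ v) := by
  simp [mlcm, Finset.sup_insert]

lemma le_mlcm {σ : Finset (V → ℕ)} {m : V → ℕ} (hm : m ∈ σ) (v : V) :
    m v ≤ mlcm σ v := Finset.le_sup (f := fun g => g v) hm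

lemma mlcm_mono {σ σ' : Finset (V → ℕ)} (h : σ ⊆ σ') (v : V) :
    mlcm σ v ≤ mlcm σ' v := Finset.sup_mono h

lemma isBridge_iff {σ : Finset (V → ℕ)} {m : V → ℕ} (hm : m ∈ σ) :
    IsBridge σ m ↔ ∀ v, m v ≤ mlcm (σ.erase m) v := by
  constructor
  · rintro ⟨-, h⟩ v
    rw [show mlcm (σ.erase m) v = mlcm σ v from congrFun h v]
    exact le_mlcm hm v
  · intro h
    refine ⟨hm, funext fun v => le_antisymm (mlcm_mono (Finset.erase_subset _ _) v) ?_⟩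
    refine Finset.sup_le fun g hg => ?_
    by_cases hgm : g = m
    · subst hgm; exact h v
    · exact le_mlcm (Finset.mem_erase.mpr ⟨hgm, hg⟩) v

lemma isGap_iff {σ : Finset (V → ℕ)} {m : V → ℕ} (hm : m ∉ σ) :
    IsGap σ m ↔ ∀ v, m v ≤ mlcm σ v := by
  constructor
  · rintro ⟨-, h⟩ v
    rw [show mlcm σ v = mlcm (insert m σ) v from (congrFun h v).symm]
    exact le_mlcm (Finset.mem_insert_self _ _) v
  · intro h
    refine ⟨hm, funext fun v => ?_⟩
    rw [mlcm_insert]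
    exact max_eq_right (h v)

lemma edgeMon_apply_pair (u v x : V) :
    edgeMon s(u, v) x = if x = u ∨ x = v then 1 else 0 := by
  simp [edgeMon, Sym2.mem_iff]

lemma edgeMon_le_one (e : Sym2 V) (x : V) : edgeMon e x ≤ 1 := by
  unfold edgeMon; split <;> omega

lemma edgeMon_swap (u v : V) : edgeMon s(u, v) = edgeMon s(v, u) := by
  rw [Sym2.eq_swap]

lemma mem_edgeGens_iff [Fintype V] {G : SimpleGraph V} {m : V → ℕ} :
    m ∈ edgeGens G ↔ ∃ u v, G.Adj u v ∧ m = edgeMon s(u, v) := by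
  unfold edgeGens
  simp only [Finset.mem_image, Finset.mem_filter, Finset.mem_univ, true_and]
  constructor
  · rintro ⟨e, he, rfl⟩
    induction e with
    | _ u v => exact ⟨u, v, he, rfl⟩
  · rintro ⟨u, v, huv, rfl⟩
    exact ⟨s(u, v), huv, rfl⟩

/-- structure of a generator containing a given vertex -/
lemma mon_struct [Fintype V] {G : SimpleGraph V} {m : V → ℕ} (hm : m ∈ edgeGens G)
    {x : V} (hx : m x ≠ 0) :
    ∃ y, G.Adj x y ∧ m = edgeMon s(x, y) ∧ ∀ z, m z ≠ 0 ↔ (z = x ∨ z = y) := by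
  obtain ⟨u, v, huv, rfl⟩ := mem_edgeGens_iff.mp hm
  rw [edgeMon_apply_pair] at hx
  have hx' : x = u ∨ x = v := by by_contra h; simp [h] at hx
  rcases hx' with rfl | rfl
  · exact ⟨v, huv, rfl, fun z => by rw [edgeMon_apply_pair]; split <;> simp_all⟩
  · refine ⟨u, huv.symm, edgeMon_swap u x, fun z => ?_⟩
    rw [edgeMon_apply_pair]; split <;> [simp_all; simp_all] 
    <;> tauto

lemma mlcm_eq_zero_iff {σ : Finset (V → ℕ)} {v : V} :
    mlcm σ v = 0 ↔ ∀ g ∈ σ, g v = 0 := by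
  constructor
  · intro h g hg
    exact Nat.le_zero.mp (le_trans (le_mlcm hg v) (Nat.le_of_eq h))
  · intro h
    exact Nat.le_zero.mp (Finset.sup_le fun g hg => Nat.le_of_eq (h g hg))

/-- extract a private vertex from a witness of non-true-gap-ness -/
lemma extract_private {σ : Finset (V → ℕ)} {g m' : V → ℕ} (hg : g ∉ σ)
    (hm' : m' ∈ σ) (hbr : IsBridge (insert g σ) m') (hnbr : ¬ IsBridge σ m') :
    ∃ v, mlcm (σ.erase m') v < m' v ∧ m' v ≤ g v := by
  have hne : m' ≠ g := fun h => hg (h ▸ hm')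
  rw [isBridge_iff hm'] at hnbr
  push_neg at hnbr
  obtain ⟨v, hv⟩ := hnbr
  refine ⟨v, hv, ?_⟩
  have h1 := (isBridge_iff (Finset.mem_insert_of_mem hm')).mp hbr v
  rw [Finset.erase_insert_of_ne hne.symm, mlcm_insert] at h1
  omega

/-- extract the witness that a small gap is not a true gap, from potential-type-2-ness -/
lemma pot_extract {M : Finset (V → ℕ)} {ord : (V → ℕ) → ℕ} {σ : Finset (V → ℕ)}
    (hpot : PotType2 M ord σ) {b : V → ℕ} (hsb : IsSBridge ord σ b)
    {g : V → ℕ} (hgM : g ∈ M) (hgap : IsGap σ g) (hlt : ord g < ord b) :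
    ∃ m', m' ∈ σ ∧ ord m' < ord g ∧ IsBridge (insert g σ) m' ∧ ¬ IsBridge σ m' := by
  obtain ⟨c, hc, hcprop⟩ := hpot
  have hbc := hsb.2 c hc
  have hntg : ¬ IsTrueGap ord σ g := fun htg =>
    hcprop g hgM htg (lt_of_lt_of_le hlt hbc)
  have h4 : ¬ ∀ m', IsBridge (insert g σ) m' → ord m' < ord g → IsBridge σ m' :=
    fun hh => hntg ⟨hgap, hh⟩
  push_neg at h4
  obtain ⟨m', h1, h2, h3⟩ := h4
  have hm' : m' ∈ σ := by
    rcases Finset.mem_insert.mp h1.1 with h | h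
    · exact absurd h2 (by rw [h]; omega)
    · exact h
  exact ⟨m', hm', h2, h1, h3⟩

end Aux
set_option linter.unusedSectionVars false
set_option linter.unnecessarySeqFocus false
section BFStuff

variable {VT : Type} [Fintype VT] (T : SimpleGraph VT) (w : T.edgeSet → ℕ)

lemma bf_adj_inl_inl {a b : VT} :
    (BFGraph T w).Adj (Sum.inl a) (Sum.inl b) ↔ T.Adj a b := by
  rw [BFGraph, SimpleGraph.fromRel_adj]
  constructor
  · rintro ⟨hne, h | h⟩ <;>
      rcases h with ⟨a', b', h1, h2, h3⟩ | ⟨a', e, i, h1, h2, h3⟩ <;>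
      first
        | exact Sum.noConfusion h1
        | exact Sum.noConfusion h2
        | (cases h1; done)
        | (cases h2; done)
        | (cases h1; cases h2; exact h3)
        | (cases h1; cases h2; exact h3.symm)
  · intro h
    exact ⟨by simpa using h.ne, Or.inl (Or.inl ⟨a, b, rfl, rfl, h⟩)⟩

lemma bf_adj_inl_inr {a : VT} {x : Σ e : T.edgeSet, Fin (w e)} :
    (BFGraph T w).Adj (Sum.inl a) (Sum.inr x) ↔ a ∈ (x.1 : Sym2 VT) := by
  rw [BFGraph, SimpleGraph.fromRel_adj]
  constructor
  · rintro ⟨hne, h | h⟩ <;>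
      rcases h with ⟨a', b', h1, h2, h3⟩ | ⟨a', e, i, h1, h2, h3⟩ <;>
      first
        | exact Sum.noConfusion h1
        | exact Sum.noConfusion h2
        | (cases h1; done)
        | (cases h2; done)
        | (cases h1; cases Sum.inr.inj h2; exact h3)
  · intro h
    obtain ⟨e, i⟩ := x
    exact ⟨by simp, Or.inl (Or.inr ⟨a, e, i, rfl, rfl, h⟩)⟩

lemma bf_no_inr_inr {x y : Σ e : T.edgeSet, Fin (w e)} :
    ¬ (BFGraph T w).Adj (Sum.inr x) (Sum.inr y) := by
  rw [BFGraph, SimpleGraph.fromRel_adj]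
  rintro ⟨hne, h | h⟩ <;>
    rcases h with ⟨a', b', h1, h2, h3⟩ | ⟨a', e, i, h1, h2, h3⟩ <;>
    simp at h1 h2

/-- any BF-neighbour of a tip is `inl` of a member of the base edge -/
lemma bf_adj_inr {u : VT ⊕ (Σ e : T.edgeSet, Fin (w e))} {x : Σ e : T.edgeSet, Fin (w e)}
    (h : (BFGraph T w).Adj u (Sum.inr x)) :
    ∃ a : VT, u = Sum.inl a ∧ a ∈ (x.1 : Sym2 VT) := by
  match u with
  | Sum.inl a => exact ⟨a, rfl, (bf_adj_inl_inr T w).mp h⟩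
  | Sum.inr y => exact absurd h (bf_no_inr_inr T w)

lemma adj_of_mem_mem {e : Sym2 VT} (he : e ∈ T.edgeSet) {a b : VT}
    (ha : a ∈ e) (hb : b ∈ e) (hab : a ≠ b) : T.Adj a b := by
  induction e with
  | _ x y =>
    rw [SimpleGraph.mem_edgeSet] at he
    rw [Sym2.mem_iff] at ha hb
    rcases ha with rfl | rfl <;> rcases hb with rfl | rfl <;>
      first
        | exact absurd rfl hab
        | exact he
        | exact he.symm

lemma exists_other {e : Sym2 VT} (he : e ∈ T.edgeSet) {a : VT} (ha : a ∈ e) :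
    ∃ b, T.Adj a b ∧ ∀ c, c ∈ e ↔ c = a ∨ c = b := by
  induction e with
  | _ x y =>
    rw [SimpleGraph.mem_edgeSet] at he
    rw [Sym2.mem_iff] at ha
    rcases ha with rfl | rfl
    · exact ⟨y, he, fun c => by rw [Sym2.mem_iff]⟩
    · exact ⟨x, he.symm, fun c => by rw [Sym2.mem_iff]; tauto⟩

end BFStuff
section Order

variable {VT : Type} [Fintype VT] (T : SimpleGraph VT) (w : T.edgeSet → ℕ) (r : VT)

/-- a generator is a tree monomial -/
def isTreeMon (m : (VT ⊕ (Σ e : T.edgeSet, Fin (w e))) → ℕ) : Prop :=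
  ∃ a b, T.Adj a b ∧ m = edgeMon s(Sum.inl a, Sum.inl b)

/-- depth of a monomial: max depth of tree vertices in its support -/
def dtm (m : (VT ⊕ (Σ e : T.edgeSet, Fin (w e))) → ℕ) : ℕ :=
  Finset.univ.sup fun a : VT => if m (Sum.inl a) ≠ 0 then T.dist r a else 0

def bigN : ℕ := Finset.univ.sup fun a : VT => T.dist r a

def bigK : ℕ := (edgeGens (BFGraph T w)).card + 1

def tb (m : (VT ⊕ (Σ e : T.edgeSet, Fin (w e))) → ℕ) : ℕ :=
  (edgeGens (BFGraph T w)).toList.idxOf m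

def bford (m : (VT ⊕ (Σ e : T.edgeSet, Fin (w e))) → ℕ) : ℕ :=
  (if isTreeMon T w m then bigK T w * (bigN T r - dtm T w r m)
   else bigK T w * (bigN T r + 1)) + tb T w m

lemma tb_lt {m : (VT ⊕ (Σ e : T.edgeSet, Fin (w e))) → ℕ}
    (hm : m ∈ edgeGens (BFGraph T w)) : tb T w m < bigK T w := by
  have h1 : m ∈ (edgeGens (BFGraph T w)).toList := Finset.mem_toList.mpr hm
  have h2 := List.idxOf_lt_length_iff.mpr h1
  rw [Finset.length_toList] at h2
  exact lt_trans h2 (Nat.lt_succ_self _)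

lemma dtm_le (m : (VT ⊕ (Σ e : T.edgeSet, Fin (w e))) → ℕ) :
    dtm T w r m ≤ bigN T r := by
  refine Finset.sup_le fun a _ => ?_
  split
  · exact Finset.le_sup (f := fun a : VT => T.dist r a) (Finset.mem_univ a)
  · exact Nat.zero_le _

lemma dtm_pair (a b : VT) :
    dtm T w r (edgeMon s(Sum.inl a, Sum.inl b)) = max (T.dist r a) (T.dist r b) := by
  apply le_antisymm
  · refine Finset.sup_le fun a' _ => ?_
    rw [edgeMon_apply_pair]
    by_cases h : (Sum.inl a' : VT ⊕ (Σ e : T.edgeSet, Fin (w e))) = Sum.inl a ∨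
        (Sum.inl a' : VT ⊕ (Σ e : T.edgeSet, Fin (w e))) = Sum.inl b
    · rcases h with h | h <;> cases Sum.inl.inj h
      · simp only [if_pos (Or.inl rfl)]
        split
        · exact le_max_left _ _
        · exact Nat.zero_le _
      · simp only [if_pos (Or.inr rfl)]
        split
        · exact le_max_right _ _
        · exact Nat.zero_le _
    · rw [if_neg h]
      simp only [ne_eq, not_true_eq_false, if_neg (by omega : ¬ (0 : ℕ) ≠ 0)]
      exact Nat.zero_le _
  · have hha : edgeMon s(Sum.inl a, Sum.inl b) (Sum.inl a : VT ⊕ (Σ e : T.edgeSet, Fin (w e))) ≠ 0 := by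
      rw [edgeMon_apply_pair]; simp
    have hhb : edgeMon s(Sum.inl a, Sum.inl b) (Sum.inl b : VT ⊕ (Σ e : T.edgeSet, Fin (w e))) ≠ 0 := by
      rw [edgeMon_apply_pair]; simp
    have key : ∀ c : VT, (if edgeMon s(Sum.inl a, Sum.inl b)
        (Sum.inl c : VT ⊕ (Σ e : T.edgeSet, Fin (w e))) ≠ 0 then T.dist r c else 0) ≤
        dtm T w r (edgeMon s(Sum.inl a, Sum.inl b)) := fun c =>
      Finset.le_sup (f := fun c : VT => if edgeMon s(Sum.inl a, Sum.inl b)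
        (Sum.inl c : VT ⊕ (Σ e : T.edgeSet, Fin (w e))) ≠ 0 then T.dist r c else 0)
        (Finset.mem_univ c)
    rw [max_le_iff]
    constructor
    · have := key a; rwa [if_pos hha] at this
    · have := key b; rwa [if_pos hhb] at this

lemma bford_injOn : Set.InjOn (bford T w r) (edgeGens (BFGraph T w)) := by
  intro m hm m' hm' heq
  rw [Finset.mem_coe] at hm hm'
  have e1 : ∀ g, g ∈ edgeGens (BFGraph T w) → bford T w r g % bigK T w = tb T w g := by
    intro g hg
    have : tb T w g % bigK T w = tb T w g := Nat.mod_eq_of_lt (tb_lt T w hg)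
    unfold bford
    split <;> rw [Nat.mul_add_mod] <;> exact this
  have h1 : tb T w m = tb T w m' := by
    rw [← e1 m hm, ← e1 m' hm', heq]
  have hml : m ∈ (edgeGens (BFGraph T w)).toList := Finset.mem_toList.mpr hm
  have hml' : m' ∈ (edgeGens (BFGraph T w)).toList := Finset.mem_toList.mpr hm'
  exact (List.idxOf_inj hml (y := m')).mp h1

lemma bford_tree_lt_nontree {m m' : (VT ⊕ (Σ e : T.edgeSet, Fin (w e))) → ℕ}
    (hm : m ∈ edgeGens (BFGraph T w)) (htm' : isTreeMon T w m') (htm : ¬ isTreeMon T w m) :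
    bford T w r m' < bford T w r m := by
  unfold bford
  rw [if_pos htm', if_neg htm]
  have h1 : tb T w m' < bigK T w := tb_lt T w (mem_edgeGens_iff.mpr (by obtain ⟨a, b, hab, rfl⟩ := htm'; exact ⟨_, _, (bf_adj_inl_inl T w).mpr hab, rfl⟩))
  have h2 : bigK T w * (bigN T r - dtm T w r m') ≤ bigK T w * bigN T r :=
    Nat.mul_le_mul_left _ (Nat.sub_le _ _)
  have h3 : bigK T w * (bigN T r + 1) = bigK T w * bigN T r + bigK T w := by ring
  omega

lemma bford_strict {m m' : (VT ⊕ (Σ e : T.edgeSet, Fin (w e))) → ℕ}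
    (hm' : m' ∈ edgeGens (BFGraph T w)) (htm : isTreeMon T w m) (htm' : isTreeMon T w m')
    (hd : dtm T w r m < dtm T w r m') : bford T w r m' < bford T w r m := by
  unfold bford
  rw [if_pos htm', if_pos htm]
  have h1 : tb T w m' < bigK T w := tb_lt T w hm'
  have h2 : dtm T w r m' ≤ bigN T r := dtm_le T w r m'
  have h3 : bigN T r - dtm T w r m' + 1 ≤ bigN T r - dtm T w r m := by omega
  have h4 : bigK T w * (bigN T r - dtm T w r m') + bigK T w ≤
      bigK T w * (bigN T r - dtm T w r m) := by
    calc bigK T w * (bigN T r - dtm T w r m') + bigK T w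
        = bigK T w * (bigN T r - dtm T w r m' + 1) := by ring
      _ ≤ _ := Nat.mul_le_mul_left _ h3
  omega

lemma notTree_of_inr {m : (VT ⊕ (Σ e : T.edgeSet, Fin (w e))) → ℕ}
    {x : Σ e : T.edgeSet, Fin (w e)} (hm : m (Sum.inr x) ≠ 0) : ¬ isTreeMon T w m := by
  rintro ⟨a, b, hab, rfl⟩
  rw [edgeMon_apply_pair] at hm
  simp at hm

end Order
section Helpers
variable {V : Type*}

lemma gen_le_one [Fintype V] {G : SimpleGraph V} {m : V → ℕ}
    (hm : m ∈ edgeGens G) (v : V) : m v ≤ 1 := by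
  obtain ⟨u, u', -, rfl⟩ := mem_edgeGens_iff.mp hm
  exact edgeMon_le_one _ _

lemma edgeMon_ne_zero_iff (u v z : V) :
    edgeMon s(u, v) z ≠ 0 ↔ z = u ∨ z = v := by
  rw [edgeMon_apply_pair]
  split <;> simp_all

lemma cover_forces {σ : Finset (V → ℕ)} {m'' h1 : V → ℕ} {ρ : V}
    (h1σ : h1 ∈ σ) (hv1 : h1 ρ ≠ 0) (hz : mlcm (σ.erase m'') ρ = 0) : m'' = h1 := by
  by_contra h
  exact hv1 (mlcm_eq_zero_iff.mp hz h1 (Finset.mem_erase.mpr ⟨fun hh => h hh.symm, h1σ⟩))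

lemma two_covers {σ : Finset (V → ℕ)} {m'' h1 h2 : V → ℕ} {ρ : V}
    (h1σ : h1 ∈ σ) (h2σ : h2 ∈ σ) (hne : h1 ≠ h2)
    (hv1 : h1 ρ ≠ 0) (hv2 : h2 ρ ≠ 0) (hz : mlcm (σ.erase m'') ρ = 0) : False := by
  have e1 := cover_forces h1σ hv1 hz
  have e2 := cover_forces h2σ hv2 hz
  exact hne (e1 ▸ e2)

lemma gap_witness {M : Finset (V → ℕ)} {ord : (V → ℕ) → ℕ} {σ : Finset (V → ℕ)}
    {b : V → ℕ} (hsb : IsSBridge ord σ b) (hpot : PotType2 M ord σ)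
    {g : V → ℕ} (hgM : g ∈ M) (hgσ : g ∉ σ) (hgle : ∀ v, g v ≤ mlcm σ v)
    (hlt : ord g < ord b) :
    ∃ m'' ∈ σ, IsBridge (insert g σ) m'' ∧
      ∃ ρ, ord m'' < ord g ∧ mlcm (σ.erase m'') ρ < m'' ρ ∧ m'' ρ ≤ g ρ := by
  have hgap : IsGap σ g := (isGap_iff hgσ).mpr hgle
  obtain ⟨m'', hm''σ, hm''lt, hbr, hnbr⟩ := pot_extract hpot hsb hgM hgap hlt
  obtain ⟨ρ, hρ1, hρ2⟩ := extract_private hgσ hm''σ hbr hnbr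
  exact ⟨m'', hm''σ, hbr, ρ, hm''lt, hρ1, hρ2⟩

end Helpers
section Tree
variable {VT : Type} {T : SimpleGraph VT}
variable {VT : Type} {T : SimpleGraph VT}

/-- shortest path: a path of length dist -/
lemma exists_spath (h : T.Connected) (u v : VT) :
    ∃ p : T.Walk u v, p.IsPath ∧ p.length = T.dist u v := by
  obtain ⟨W, hW⟩ := h.exists_walk_length_eq_dist u v
  refine ⟨W.bypass, W.bypass_isPath, le_antisymm ?_ ?_⟩
  · calc W.bypass.length ≤ W.length := W.length_bypass_le
      _ = _ := hW
  · exact SimpleGraph.dist_le W.bypass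

lemma dist_le_succ_of_adj (h : T.Connected) (r : VT) {a b : VT} (hab : T.Adj a b) :
    T.dist r b ≤ T.dist r a + 1 := by
  obtain ⟨P, hP, hlen⟩ := exists_spath h r a
  have := SimpleGraph.dist_le (P.concat hab)
  rwa [SimpleGraph.Walk.length_concat, hlen] at this

/-- L1 -/
lemma tree_adj_dist_ne (hT : T.IsTree) (r : VT) {a b : VT} (hab : T.Adj a b) :
    T.dist r a ≠ T.dist r b := by
  intro heq
  obtain ⟨Pa, hPa, hla⟩ := exists_spath hT.isConnected r a
  obtain ⟨Pb, hPb, hlb⟩ := exists_spath hT.isConnected r b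
  by_cases hb : b ∈ Pa.support
  · have h1 : T.dist r b ≤ (Pa.takeUntil b hb).length := SimpleGraph.dist_le _
    have h2 := SimpleGraph.Walk.length_takeUntil_le Pa hb
    have h3 := SimpleGraph.Walk.take_spec Pa hb
    have h4 : (Pa.takeUntil b hb).length + (Pa.dropUntil b hb).length = Pa.length := by
      rw [← SimpleGraph.Walk.length_append, h3]
    have h5 : (Pa.dropUntil b hb).length = 0 := by omega
    have : b = a := by
      have := (Pa.dropUntil b hb).getVert_length
      rw [h5, SimpleGraph.Walk.getVert_zero] at this
      exact this
    exact hab.ne this.symm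
  · have hb' : b ∉ Pa.reverse.support := by
      rwa [SimpleGraph.Walk.support_reverse, List.mem_reverse]
    have hQ : (SimpleGraph.Walk.cons (hab.symm) Pa.reverse).IsPath := by
      rw [SimpleGraph.Walk.cons_isPath_iff]
      exact ⟨hPa.reverse, hb'⟩
    have hQ2 : Pb.reverse.IsPath := hPb.reverse
    have := SimpleGraph.isAcyclic_iff_path_unique.mp hT.IsAcyclic
      ⟨_, hQ⟩ ⟨_, hQ2⟩
    have hlen := congrArg (fun (q : T.Path b r) => (q : T.Walk b r).length) this
    simp only [SimpleGraph.Walk.length_cons, SimpleGraph.Walk.length_reverse] at hlen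
    omega

/-- adjacent vertices: dist differs by one -/
lemma tree_adj_dist (hT : T.IsTree) (r : VT) {a b : VT} (hab : T.Adj a b) :
    T.dist r b = T.dist r a + 1 ∨ T.dist r a = T.dist r b + 1 := by
  have h1 := dist_le_succ_of_adj hT.isConnected r hab
  have h2 := dist_le_succ_of_adj hT.isConnected r hab.symm
  have h3 := tree_adj_dist_ne hT r hab
  omega

/-- L2: two neighbors of c at depth (depth c - 1) coincide -/
lemma tree_parent_unique (hT : T.IsTree) (r : VT) {a b c : VT}
    (hac : T.Adj a c) (hbc : T.Adj b c)
    (ha : T.dist r a + 1 = T.dist r c) (hb : T.dist r b + 1 = T.dist r c) : a = b := by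
  obtain ⟨Pa, hPa, hla⟩ := exists_spath hT.isConnected r a
  obtain ⟨Pb, hPb, hlb⟩ := exists_spath hT.isConnected r b
  have hca : c ∉ Pa.support := by
    intro hc
    have h1 : T.dist r c ≤ (Pa.takeUntil c hc).length := SimpleGraph.dist_le _
    have h2 := SimpleGraph.Walk.length_takeUntil_le Pa hc
    omega
  have hcb : c ∉ Pb.support := by
    intro hc
    have h1 : T.dist r c ≤ (Pb.takeUntil c hc).length := SimpleGraph.dist_le _
    have h2 := SimpleGraph.Walk.length_takeUntil_le Pb hc
    omega
  have hQa : (SimpleGraph.Walk.cons hac.symm Pa.reverse).IsPath := by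
    rw [SimpleGraph.Walk.cons_isPath_iff]
    refine ⟨hPa.reverse, ?_⟩
    rwa [SimpleGraph.Walk.support_reverse, List.mem_reverse]
  have hQb : (SimpleGraph.Walk.cons hbc.symm Pb.reverse).IsPath := by
    rw [SimpleGraph.Walk.cons_isPath_iff]
    refine ⟨hPb.reverse, ?_⟩
    rwa [SimpleGraph.Walk.support_reverse, List.mem_reverse]
  have huniq := SimpleGraph.isAcyclic_iff_path_unique.mp hT.IsAcyclic
    (⟨_, hQa⟩ : T.Path c r) ⟨_, hQb⟩
  have := congrArg (fun (q : T.Path c r) => (q : T.Walk c r).getVert 1) huniq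
  simpa [SimpleGraph.Walk.getVert_cons_succ, SimpleGraph.Walk.getVert_zero] using this
end Tree
section Core

variable {VT : Type} [Fintype VT] {T : SimpleGraph VT} {w : T.edgeSet → ℕ}

lemma core_contradiction (hT : T.IsTree) (r : VT)
    {τ : Finset ((VT ⊕ (Σ e : T.edgeSet, Fin (w e))) → ℕ)}
    {b1 b2 : (VT ⊕ (Σ e : T.edgeSet, Fin (w e))) → ℕ}
    (h1M : insert b1 τ ⊆ edgeGens (BFGraph T w))
    (h2M : insert b2 τ ⊆ edgeGens (BFGraph T w))
    (hb1τ : b1 ∉ τ) (hb2τ : b2 ∉ τ) (hb12 : b1 ≠ b2)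
    (hsb1 : IsSBridge (bford T w r) (insert b1 τ) b1)
    (hsb2 : IsSBridge (bford T w r) (insert b2 τ) b2)
    (hpot2 : PotType2 (edgeGens (BFGraph T w)) (bford T w r) (insert b2 τ))
    (hlt : bford T w r b1 < bford T w r b2) : False := by
  set M := edgeGens (BFGraph T w) with hM
  set ord := bford T w r with hord
  set σ1 := insert b1 τ with hσ1
  set σ2 := insert b2 τ with hσ2
  have hb1M : b1 ∈ M := h1M (Finset.mem_insert_self _ _)
  have hb2M : b2 ∈ M := h2M (Finset.mem_insert_self _ _)
  have hτM : τ ⊆ M := fun x hx => h1M (Finset.mem_insert_of_mem hx)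
  -- A : lcm σᵢ = lcm τ
  have hA1 : ∀ v, b1 v ≤ mlcm τ v := by
    intro v
    have h := hsb1.1.2
    rw [hσ1] at h
    rw [Finset.erase_insert hb1τ] at h
    rw [congrFun h v]
    exact le_mlcm (Finset.mem_insert_self _ _) v
  have hA2 : ∀ v, b2 v ≤ mlcm τ v := by
    intro v
    have h := hsb2.1.2
    rw [hσ2, Finset.erase_insert hb2τ] at h
    rw [congrFun h v]
    exact le_mlcm (Finset.mem_insert_self _ _) v
  -- B : b1 is a gap of σ2
  have hb1σ2 : b1 ∉ σ2 := by
    rw [hσ2, Finset.mem_insert]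
    rintro (h | h)
    · exact hb12 h
    · exact hb1τ h
  -- C : extract the witness e
  obtain ⟨e, heσ2, hebrIns, p, helt, hρ1, hρ2⟩ :=
    gap_witness hsb2 hpot2 hb1M hb1σ2
      (fun v => le_trans (hA1 v) (mlcm_mono (Finset.subset_insert _ _) v)) hlt
  have heM : e ∈ M := h2M heσ2
  have hele1 : ∀ v, e v ≤ 1 := gen_le_one heM
  have hep1 : e p = 1 := le_antisymm (hele1 p) (by omega)
  have hmlcm0 : mlcm (σ2.erase e) p = 0 := by
    have := hele1 p; omega
  have hb1p : b1 p ≠ 0 := by omega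
  have he_ne_b2 : e ≠ b2 := by
    rintro rfl
    have h1 : mlcm (σ2.erase e) p = mlcm τ p := by rw [hσ2, Finset.erase_insert hb2τ]
    have h2 := hA2 p
    omega
  have heτ : e ∈ τ := by
    rcases Finset.mem_insert.mp heσ2 with h | h
    · exact absurd h he_ne_b2
    · exact h
  have he_ne_b1 : b1 ≠ e := fun h => hb1τ (h ▸ heτ)
  -- D : decompose σ2.erase e
  have hske : σ2.erase e = insert b2 (τ.erase e) :=
    Finset.erase_insert_of_ne he_ne_b2.symm
  have hp_b2 : b2 p = 0 := by
    have h := congrFun (congrArg mlcm hske) p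
    rw [mlcm_insert] at h
    omega
  have hp_τ : mlcm (τ.erase e) p = 0 := by
    have h := congrFun (congrArg mlcm hske) p
    rw [mlcm_insert] at h
    omega
  -- E : structure of e and b1
  obtain ⟨q, hpq, heE, heSupp⟩ := mon_struct heM (show e p ≠ 0 by omega)
  obtain ⟨s, hps, hb1E, hb1Supp⟩ := mon_struct hb1M hb1p
  have hqp : q ≠ p := fun h => (BFGraph T w).irrefl (h ▸ hpq)
  have heq1 : e q = 1 := by
    rw [heE, edgeMon_apply_pair, if_pos (Or.inr rfl)]
  -- F : dichotomy at q
  have hσ1e : σ1.erase e = insert b1 (τ.erase e) :=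
    Finset.erase_insert_of_ne he_ne_b1
  by_cases hq1 : b1 q = 0 ∧ mlcm (τ.erase e) q = 0
  case neg =>
    -- e is a bridge of σ1, contradicting minimality of b1
    have hbr : IsBridge σ1 e := by
      rw [isBridge_iff (by rw [hσ1]; exact Finset.mem_insert_of_mem heτ)]
      intro v
      rw [show σ1.erase e = insert b1 (τ.erase e) from hσ1e, mlcm_insert]
      by_cases hv : e v = 0
      · omega
      · rcases (heSupp v).mp hv with rfl | rfl
        · exact le_trans hρ2 (le_max_left _ _)
        · have h2 : ¬ (b1 v = 0 ∧ mlcm (τ.erase e) v = 0) := hq1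
          have h3 := heq1
          omega
    exact absurd (hsb1.2 e hbr) (not_le.mpr helt)
  case pos =>
    obtain ⟨hq_b1, hq_τ⟩ := hq1
    -- q is covered by b2
    have hq_b2 : b2 q ≠ 0 := by
      have h := (isBridge_iff (Finset.mem_insert_of_mem heσ2)).mp hebrIns q
      have h2 : (insert b1 σ2).erase e = insert b1 (σ2.erase e) :=
        Finset.erase_insert_of_ne he_ne_b1
      rw [h2, hske] at h
      rw [mlcm_insert, mlcm_insert] at h
      omega
    obtain ⟨t, hqt, hb2E, hb2Supp⟩ := mon_struct hb2M hq_b2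
    have htq : t ≠ q := fun h => (BFGraph T w).irrefl (h ▸ hqt)
    have htp : t ≠ p := fun h => ((hb2Supp p).mpr (Or.inr h.symm)) hp_b2
    have hsq : s ≠ q := fun h => ((hb1Supp q).mpr (Or.inr h.symm)) hq_b1
    have hsp : s ≠ p := fun h => (BFGraph T w).irrefl (h ▸ hps)
    have hb1s : b1 s ≠ 0 := (hb1Supp s).mpr (Or.inr rfl)
    have hb2t : b2 t ≠ 0 := (hb2Supp t).mpr (Or.inr rfl)
    have het : e t = 0 := by
      by_contra hcon
      rcases (heSupp t).mp hcon with h | h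
      · exact htp h
      · exact htq h
    -- covers of s and t inside τ
    obtain ⟨hct, hctτ, hctv⟩ : ∃ h ∈ τ, h t ≠ 0 := by
      by_contra hcon
      push_neg at hcon
      exact hb2t (Nat.le_zero.mp ((hA2 t).trans (Nat.le_of_eq (mlcm_eq_zero_iff.mpr hcon))))
    have hct_ne_b2 : hct ≠ b2 := fun h => hb2τ (h ▸ hctτ)
    have hctσ2 : hct ∈ σ2 := by rw [hσ2]; exact Finset.mem_insert_of_mem hctτ
    have hb2σ2 : b2 ∈ σ2 := by rw [hσ2]; exact Finset.mem_insert_self _ _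
    have heσ2' : e ∈ σ2 := heσ2
    -- main case split on the shape of q and t
    obtain qa | qx := q
    · -- q = inl qa
      obtain ta | tx := t
      · -- Case C : everything in the tree
        have hadj2 : T.Adj qa ta := (bf_adj_inl_inl T w).mp hqt
        have hb2tree : isTreeMon T w b2 := ⟨qa, ta, hadj2, hb2E⟩
        have hb1tree : isTreeMon T w b1 := by
          by_contra hcon
          exact absurd (bford_tree_lt_nontree T w r hb1M hb2tree hcon) (by rw [← hord]; omega)
        obtain ⟨x, y, hxy, hb1E'⟩ := hb1tree
        have hpxy : p = Sum.inl x ∨ p = Sum.inl y := by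
          have := hb1p; rw [hb1E'] at this; exact (edgeMon_ne_zero_iff _ _ _).mp this
        have hsxy : s = Sum.inl x ∨ s = Sum.inl y := by
          have := hb1s; rw [hb1E'] at this; exact (edgeMon_ne_zero_iff _ _ _).mp this
        -- extract pa, sa with p = inl pa, s = inl sa, T.Adj pa sa
        obtain ⟨pa, sa, rfl, rfl, hadj1⟩ :
            ∃ pa sa, p = Sum.inl pa ∧ s = Sum.inl sa ∧ T.Adj pa sa := by
          rcases hpxy with rfl | rfl <;> rcases hsxy with h | h
          · exact absurd h hsp
          · exact ⟨x, y, rfl, h, hxy⟩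
          · exact ⟨y, x, rfl, h, hxy.symm⟩
          · exact absurd h hsp
        have hadjpq : T.Adj pa qa := (bf_adj_inl_inl T w).mp hpq
        have hetree : isTreeMon T w e := ⟨pa, qa, hadjpq, heE⟩
        have hb1tree' : isTreeMon T w b1 := ⟨pa, sa, hadj1, hb1E⟩
        have hd1 : dtm T w r b1 ≤ dtm T w r e := by
          by_contra hcon
          push_neg at hcon
          exact absurd (bford_strict T w r hb1M hetree hb1tree' hcon) (by rw [← hord]; omega)
        have hd2 : dtm T w r b2 ≤ dtm T w r e := by
          by_contra hcon
          push_neg at hcon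
          exact absurd (bford_strict T w r hb2M hetree hb2tree hcon) (by rw [← hord]; omega)
        rw [heE, hb1E, dtm_pair, dtm_pair] at *
        rw [hb2E, dtm_pair] at hd2
        rcases tree_adj_dist hT r hadjpq with hcase | hcase
        · -- dist qa = dist pa + 1
          rcases tree_adj_dist hT r hadj2 with h2 | h2
          · omega
          · have : ta = pa := tree_parent_unique hT r hadj2.symm hadjpq
              (by omega) (by omega)
            exact htp (congrArg Sum.inl this)
        · -- dist pa = dist qa + 1
          rcases tree_adj_dist hT r hadj1 with h2 | h2
          · omega
          · have : sa = qa := tree_parent_unique hT r hadj1.symm hadjpq.symm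
              (by omega) (by omega)
            exact hsq (congrArg Sum.inl this)
      · -- Case A : t is a tip
        have hqa_tx : qa ∈ (tx.1 : Sym2 VT) := (bf_adj_inl_inr T w).mp hqt
        obtain ⟨u0, htu0, hctE, hctSupp⟩ := mon_struct (hτM hctτ) hctv
        obtain ⟨ya, rfl, hya⟩ := bf_adj_inr T w htu0.symm
        by_cases hyaq : ya = qa
        · -- then hct = b2, impossible
          subst hyaq
          exact hct_ne_b2 (by rw [hctE, hb2E, edgeMon_swap])
        by_cases hyap : (Sum.inl ya : VT ⊕ (Σ e : T.edgeSet, Fin (w e))) = p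
        · -- then hct covers p in τ.erase e, impossible
          have hctp : hct p ≠ 0 := (hctSupp p).mpr (Or.inr hyap.symm)
          have hcte : hct ≠ e := fun h => (h ▸ hctv) het
          exact hctp (mlcm_eq_zero_iff.mp hp_τ hct
            (Finset.mem_erase.mpr ⟨hcte, hctτ⟩))
        · -- the base edge of the tip gives a small tree gap
          have hadj : T.Adj qa ya :=
            adj_of_mem_mem T tx.1.2 hqa_tx hya (fun h => hyaq h.symm)
          set g : (VT ⊕ (Σ e : T.edgeSet, Fin (w e))) → ℕ :=
            edgeMon s(Sum.inl qa, Sum.inl ya) with hgdef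
          have hgq : g (Sum.inl qa) ≠ 0 := (edgeMon_ne_zero_iff _ _ _).mpr (Or.inl rfl)
          have hgya : g (Sum.inl ya) ≠ 0 := (edgeMon_ne_zero_iff _ _ _).mpr (Or.inr rfl)
          have hgt : g (Sum.inr tx) = 0 := by
            rw [hgdef, edgeMon_apply_pair]
            simp
          have hge : g ≠ e := by
            intro h
            have := hgya
            rw [h] at this
            rcases (heSupp _).mp this with hh | hh
            · exact hyap hh
            · exact hyaq (Sum.inl.inj hh)
          have hgb2 : g ≠ b2 := by
            intro h
            rw [h] at hgt
            exact hb2t hgt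
          have hgτ : g ∉ τ := by
            intro hgτ
            exact hgq (mlcm_eq_zero_iff.mp hq_τ g (Finset.mem_erase.mpr ⟨hge, hgτ⟩))
          have hgσ2 : g ∉ σ2 := by
            rw [hσ2, Finset.mem_insert]
            rintro (h | h)
            · exact hgb2 h
            · exact hgτ h
          have hgM : g ∈ M := mem_edgeGens_iff.mpr
            ⟨_, _, (bf_adj_inl_inl T w).mpr hadj, rfl⟩
          have hgtree : isTreeMon T w g := ⟨qa, ya, hadj, rfl⟩
          have hctya : hct (Sum.inl ya) ≠ 0 := (hctSupp _).mpr (Or.inr rfl)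
          have hgle : ∀ v, g v ≤ mlcm σ2 v := by
            intro v
            by_cases hv : g v = 0
            · omega
            rcases (edgeMon_ne_zero_iff _ _ _).mp (hgdef ▸ hv) with rfl | rfl
            · have h1 := le_mlcm heσ2' (Sum.inl qa)
              have h2 := edgeMon_le_one (V := VT ⊕ (Σ e : T.edgeSet, Fin (w e))) s(Sum.inl qa, Sum.inl ya) (Sum.inl qa)
              rw [← hgdef] at h2
              omega
            · have h1 := le_mlcm hctσ2 (Sum.inl ya)
              have h2 := edgeMon_le_one (V := VT ⊕ (Σ e : T.edgeSet, Fin (w e))) s(Sum.inl qa, Sum.inl ya) (Sum.inl ya)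
              rw [← hgdef] at h2
              omega
          have hb2ntree : ¬ isTreeMon T w b2 := notTree_of_inr T w (by
            have := hb2t; exact this)
          have hordg : ord g < ord b2 := by
            rw [hord]; exact bford_tree_lt_nontree T w r hb2M hgtree hb2ntree
          obtain ⟨m'', hm''σ2, hm''br, ρ, hm''lt, hw1, hw2⟩ :=
            gap_witness hsb2 hpot2 hgM hgσ2 hgle hordg
          have hm''le1 := gen_le_one (h2M hm''σ2) ρ
          have hz : mlcm (σ2.erase m'') ρ = 0 := by omega
          have hgρ : g ρ ≠ 0 := by omega
          rcases (edgeMon_ne_zero_iff _ _ _).mp (hgdef ▸ hgρ) with rfl | rfl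
          · -- ρ = q : two covers e and b2
            exact two_covers heσ2' hb2σ2 he_ne_b2 (by omega) hq_b2 hz
          · -- ρ = inl ya : forced m'' = hct, order contradiction
            have hmct : m'' = hct := cover_forces hctσ2 hctya hz
            have hctntree : ¬ isTreeMon T w hct := notTree_of_inr T w (by
              have := hctv; exact this)
            have := bford_tree_lt_nontree T w r (hτM hctτ) hgtree hctntree
            rw [hmct] at hm''lt
            rw [← hord] at this
            omega
    · -- Case B : q is a tip
      obtain ⟨pa, rfl, hpa⟩ := bf_adj_inr T w hpq
      obtain ⟨ta, rfl, hta⟩ := bf_adj_inr T w hqt.symm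
      have hpata : pa ≠ ta := fun h => htp (congrArg Sum.inl h.symm)
      have hadj : T.Adj pa ta := adj_of_mem_mem T qx.1.2 hpa hta (fun h => hpata h)
      set g : (VT ⊕ (Σ e : T.edgeSet, Fin (w e))) → ℕ :=
        edgeMon s(Sum.inl pa, Sum.inl ta) with hgdef
      have hgp : g (Sum.inl pa) ≠ 0 := (edgeMon_ne_zero_iff _ _ _).mpr (Or.inl rfl)
      have hgt : g (Sum.inl ta) ≠ 0 := (edgeMon_ne_zero_iff _ _ _).mpr (Or.inr rfl)
      have hgq : g (Sum.inr qx) = 0 := by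
        rw [hgdef, edgeMon_apply_pair]; simp
      have hge : g ≠ e := by
        intro h
        rw [h] at hgq
        omega
      have hgb2 : g ≠ b2 := by
        intro h
        rw [h] at hgq
        exact hq_b2 hgq
      have hgτ : g ∉ τ := by
        intro hgτ
        exact hgp (mlcm_eq_zero_iff.mp hp_τ g (Finset.mem_erase.mpr ⟨hge, hgτ⟩))
      have hgσ2 : g ∉ σ2 := by
        rw [hσ2, Finset.mem_insert]
        rintro (h | h)
        · exact hgb2 h
        · exact hgτ h
      have hgM : g ∈ M := mem_edgeGens_iff.mpr
        ⟨_, _, (bf_adj_inl_inl T w).mpr hadj, rfl⟩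
      have hgtree : isTreeMon T w g := ⟨pa, ta, hadj, rfl⟩
      have hgle : ∀ v, g v ≤ mlcm σ2 v := by
        intro v
        by_cases hv : g v = 0
        · omega
        rcases (edgeMon_ne_zero_iff _ _ _).mp (hgdef ▸ hv) with rfl | rfl
        · have h1 := le_mlcm heσ2' (Sum.inl pa)
          have h2 := edgeMon_le_one s((Sum.inl pa : VT ⊕ (Σ e : T.edgeSet, Fin (w e))), Sum.inl ta) (Sum.inl pa)
          rw [← hgdef] at h2
          omega
        · have h1 := le_mlcm hb2σ2 (Sum.inl ta)
          have h2 := edgeMon_le_one s((Sum.inl pa : VT ⊕ (Σ e : T.edgeSet, Fin (w e))), Sum.inl ta) (Sum.inl ta)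
          rw [← hgdef] at h2
          omega
      have hb2ntree : ¬ isTreeMon T w b2 := notTree_of_inr T w hq_b2
      have hordg : ord g < ord b2 := by
        rw [hord]; exact bford_tree_lt_nontree T w r hb2M hgtree hb2ntree
      obtain ⟨m'', hm''σ2, hm''br, ρ, hm''lt, hw1, hw2⟩ :=
        gap_witness hsb2 hpot2 hgM hgσ2 hgle hordg
      have hm''le1 := gen_le_one (h2M hm''σ2) ρ
      have hz : mlcm (σ2.erase m'') ρ = 0 := by omega
      have hgρ : g ρ ≠ 0 := by omega
      rcases (edgeMon_ne_zero_iff _ _ _).mp (hgdef ▸ hgρ) with rfl | rfl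
      · -- ρ = p : m'' must be e, order contradiction
        have hme : m'' = e := cover_forces heσ2' (by omega) hz
        have hentree : ¬ isTreeMon T w e := notTree_of_inr T w (show e (Sum.inr qx) ≠ 0 by omega)
        have := bford_tree_lt_nontree T w r heM hgtree hentree
        rw [hme] at hm''lt
        rw [← hord] at this
        omega
      · -- ρ = t : two covers hct and b2
        exact two_covers hctσ2 hb2σ2 hct_ne_b2 hctv hb2t hz

end Core

/-- **Proposition 4.9.** The edge ideal of `BF(T,w)` is bridge-friendly, for any finite
tree `T` with at least one edge and any edge-weight function `w : E(T) → ℕ`. -/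
theorem BFGraph_bridgeFriendly {VT : Type} [Fintype VT] (T : SimpleGraph VT)
    (hT : T.IsTree) (hedge : T.edgeSet.Nonempty) (w : T.edgeSet → ℕ) :
    BridgeFriendly (edgeGens (BFGraph T w)) := by
  obtain ⟨r⟩ := hT.isConnected.nonempty
  refine ⟨bford T w r, bford_injOn T w r, ?_⟩
  intro σ hσ hpot
  refine ⟨hpot, ?_⟩
  intro σ' hσ' hne hpot' b b' hsb hsb' heq
  have hbσ : b ∈ σ := hsb.1.1
  have hb'σ' : b' ∈ σ' := hsb'.1.1
  have hσeq : σ = insert b (σ.erase b) := (Finset.insert_erase hbσ).symm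
  have hσ'eq : σ' = insert b' (σ.erase b) := by rw [← heq, Finset.insert_erase hb'σ']
  have hbτ : b ∉ σ.erase b := Finset.notMem_erase _ _
  have hb'τ : b' ∉ σ.erase b := heq ▸ Finset.notMem_erase _ _
  have hbb' : b ≠ b' := by
    intro h
    apply hne
    rw [hσ'eq, ← h, ← hσeq]
  have hbM : b ∈ edgeGens (BFGraph T w) := hσ hbσ
  have hb'M : b' ∈ edgeGens (BFGraph T w) := hσ' hb'σ'
  rcases lt_trichotomy (bford T w r b) (bford T w r b') with h | h | h
  · exact h
  · exact absurd (bford_injOn T w r (Finset.mem_coe.mpr hbM) (Finset.mem_coe.mpr hb'M) h)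
      hbb'
  · exfalso
    refine core_contradiction hT r (τ := σ.erase b) (b1 := b') (b2 := b)
      ?_ ?_ hb'τ hbτ hbb'.symm ?_ ?_ ?_ h
    · rw [← hσ'eq]; exact hσ'
    · rw [← hσeq]; exact hσ
    · rw [← hσ'eq]; exact hsb'
    · rw [← hσeq]; exact hsb
    · rw [← hσeq]; exact hpot

end ChauHaMaithani
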